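/- Under Assumption (A2), the matrix T̃ is symmetric, and for every v ∈ ℝ^N one has ⟨T̃v, v⟩ ≥ ((λ̲₂ − γ₁)/(γ₂ + λ̲₂)) · ((γ₂ − λ̄₁)/(γ₁ + λ̄₁)) · ⟨v, v⟩. In particular, if moreover γ₁ < λ̲₂, then T̃ is symmetric positive definite. -/

import Mathlib

open Matrix

namespace Matrix.PosSemidef

/-- The square root of a positive semidefinite matrix, as defined in Mathlib (Dec 2024). -/
noncomputable def sqrt {n 𝕜 : Type*} [Fintype n] [DecidableEq n] [RCLike 𝕜] [PartialOrder 𝕜]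
    {A : Matrix n n 𝕜} (hA : A.PosSemidef) : Matrix n n 𝕜 :=
  hA.1.eigenvectorUnitary.1 * diagonal ((↑) ∘ (Real.sqrt ·) ∘ hA.1.eigenvalues) *
    (star hA.1.eigenvectorUnitary : Matrix n n 𝕜)

end Matrix.PosSemidef

namespace TildeTAux

variable {N : ℕ}

noncomputable def conjD (U : Matrix.unitaryGroup (Fin N) ℝ) (f : Fin N → ℝ) :
    Matrix (Fin N) (Fin N) ℝ :=
  (U : Matrix (Fin N) (Fin N) ℝ) * Matrix.diagonal f * star (U : Matrix (Fin N) (Fin N) ℝ)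

lemma star_mul_selfU (U : Matrix.unitaryGroup (Fin N) ℝ) :
    star (U : Matrix (Fin N) (Fin N) ℝ) * (U : Matrix (Fin N) (Fin N) ℝ) = 1 :=
  Matrix.mem_unitaryGroup_iff'.mp U.2

lemma mul_star_selfU (U : Matrix.unitaryGroup (Fin N) ℝ) :
    (U : Matrix (Fin N) (Fin N) ℝ) * star (U : Matrix (Fin N) (Fin N) ℝ) = 1 :=
  Matrix.mem_unitaryGroup_iff.mp U.2

lemma conjD_mul (U : Matrix.unitaryGroup (Fin N) ℝ) (f g : Fin N → ℝ) :
    conjD U f * conjD U g = conjD U (fun i => f i * g i) := by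
  unfold conjD
  simp only [Matrix.mul_assoc]
  rw [← Matrix.mul_assoc (star (U : Matrix (Fin N) (Fin N) ℝ)) (U : Matrix (Fin N) (Fin N) ℝ),
    star_mul_selfU, Matrix.one_mul, ← Matrix.mul_assoc (Matrix.diagonal f),
    Matrix.diagonal_mul_diagonal]

lemma conjD_add (U : Matrix.unitaryGroup (Fin N) ℝ) (f g : Fin N → ℝ) :
    conjD U f + conjD U g = conjD U (fun i => f i + g i) := by
  unfold conjD
  rw [← Matrix.add_mul, ← Matrix.mul_add, ← Matrix.diagonal_add]

lemma conjD_const (U : Matrix.unitaryGroup (Fin N) ℝ) (c : ℝ) :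
    conjD U (fun _ => c) = c • 1 := by
  unfold conjD
  rw [← Matrix.smul_one_eq_diagonal, Matrix.mul_smul, Matrix.mul_one, Matrix.smul_mul,
    mul_star_selfU]

lemma conjD_hermitian (U : Matrix.unitaryGroup (Fin N) ℝ) (f : Fin N → ℝ) :
    (conjD U f).IsHermitian := by
  unfold conjD Matrix.IsHermitian
  rw [Matrix.conjTranspose_mul, Matrix.conjTranspose_mul, Matrix.diagonal_conjTranspose,
    ← Matrix.star_eq_conjTranspose, ← Matrix.star_eq_conjTranspose, star_star, Matrix.mul_assoc]
  simp [Matrix.star_eq_conjTranspose]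

lemma conjD_posSemidef (U : Matrix.unitaryGroup (Fin N) ℝ) {f : Fin N → ℝ}
    (hf : ∀ i, 0 ≤ f i) : (conjD U f).PosSemidef := by
  have := (Matrix.posSemidef_diagonal_iff.mpr hf).mul_mul_conjTranspose_same
    (U : Matrix (Fin N) (Fin N) ℝ)
  rwa [← Matrix.star_eq_conjTranspose] at this

lemma conjD_inv (U : Matrix.unitaryGroup (Fin N) ℝ) {f : Fin N → ℝ}
    (hf : ∀ i, f i ≠ 0) : (conjD U f)⁻¹ = conjD U (fun i => (f i)⁻¹) := by
  apply Matrix.inv_eq_right_inv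
  rw [conjD_mul]
  have : (fun i => f i * (f i)⁻¹) = fun _ : Fin N => (1 : ℝ) := by
    funext i; exact mul_inv_cancel₀ (hf i)
  rw [this, conjD_const, one_smul]

lemma conjD_sqrt (U : Matrix.unitaryGroup (Fin N) ℝ) {B : Matrix (Fin N) (Fin N) ℝ}
    (hB : B.PosSemidef) {f : Fin N → ℝ} (hf : ∀ i, 0 ≤ f i)
    (hBf : B = conjD U f) : hB.sqrt = conjD U (fun i => Real.sqrt (f i)) := by
  have h1 : hB.sqrt = cfc Real.sqrt B := by
    rw [hB.1.cfc_eq]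
    simp only [Matrix.PosSemidef.sqrt, Matrix.IsHermitian.cfc, Unitary.conjStarAlgAut_apply]
  open MatrixOrder in
  rw [h1, ← cfcₙ_eq_cfc, ← CFC.sqrt_eq_real_sqrt B hB.nonneg]
  refine CFC.sqrt_unique ?_ (conjD_posSemidef U (fun i => Real.sqrt_nonneg (f i))).nonneg
  rw [conjD_mul, hBf]
  have : (fun i => Real.sqrt (f i) * Real.sqrt (f i)) = f :=
    funext fun i => Real.mul_self_sqrt (hf i)
  rw [this]

lemma conjD_quad_lower (U : Matrix.unitaryGroup (Fin N) ℝ) {f : Fin N → ℝ} {c : ℝ}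
    (hf : ∀ i, c ≤ f i) (v : Fin N → ℝ) :
    c * (v ⬝ᵥ v) ≤ (conjD U f *ᵥ v) ⬝ᵥ v := by
  have hpsd : (conjD U (fun i => f i - c)).PosSemidef :=
    conjD_posSemidef U (fun i => sub_nonneg.mpr (hf i))
  have hsplit : conjD U f = conjD U (fun i => f i - c) + c • 1 := by
    rw [← conjD_const U c, conjD_add]
    simp
  have h0 := hpsd.dotProduct_mulVec_nonneg v
  rw [show star v = v from star_trivial v] at h0
  have hdc : v ⬝ᵥ (conjD U (fun i => f i - c) *ᵥ v) =
      (conjD U (fun i => f i - c) *ᵥ v) ⬝ᵥ v := dotProduct_comm _ _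
  rw [hsplit, Matrix.add_mulVec, add_dotProduct, Matrix.smul_mulVec,
    Matrix.one_mulVec, smul_dotProduct]
  rw [hdc] at h0
  have : c • (v ⬝ᵥ v) = c * (v ⬝ᵥ v) := rfl
  linarith [h0, this.le]

lemma symm_shuffle {A : Matrix (Fin N) (Fin N) ℝ} (hA : A.IsHermitian)
    (x y : Fin N → ℝ) : (A *ᵥ x) ⬝ᵥ y = x ⬝ᵥ (A *ᵥ y) := by
  rw [dotProduct_comm, Matrix.dotProduct_mulVec, dotProduct_comm,
    ← Matrix.vecMul_transpose, ← Matrix.conjTranspose_eq_transpose_of_trivial, hA.eq]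

end TildeTAux

set_option maxHeartbeats 2000000 in
open TildeTAux in
theorem tildeT_symmetric_and_lower_bound (N : ℕ) (hN : 1 ≤ N)
    (S1 S2 : Matrix (Fin N) (Fin N) ℝ) (hS1 : S1.PosDef) (hS2 : S2.PosDef)
    (lmin1 lmax1 lmin2 lmax2 : ℝ)
    (hlmin1 : IsLeast (Set.range hS1.isHermitian.eigenvalues) lmin1)
    (hlmax1 : IsGreatest (Set.range hS1.isHermitian.eigenvalues) lmax1)
    (hlmin2 : IsLeast (Set.range hS2.isHermitian.eigenvalues) lmin2)
    (hlmax2 : IsGreatest (Set.range hS2.isHermitian.eigenvalues) lmax2)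
    (γ1 γ2 : ℝ) (hγ1 : 0 < γ1) (hγ1' : γ1 ≤ min lmin1 lmin2)
    (hγ2 : 3 * max lmax1 lmax2 ≤ γ2)
    (hP1 : (γ1 • (1 : Matrix (Fin N) (Fin N) ℝ) + S1).PosSemidef)
    (hQ1 : (γ2 • (1 : Matrix (Fin N) (Fin N) ℝ) - S1).PosSemidef)
    (Tt : Matrix (Fin N) (Fin N) ℝ)
    (hTt : Tt = hP1.sqrt⁻¹ * hQ1.sqrt * (S2 - γ1 • (1 : Matrix (Fin N) (Fin N) ℝ)) *
      (γ2 • (1 : Matrix (Fin N) (Fin N) ℝ) + S2)⁻¹ * hQ1.sqrt * hP1.sqrt⁻¹) :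
    Tt.IsSymm ∧
      (∀ v : Fin N → ℝ,
        ((lmin2 - γ1) / (γ2 + lmin2)) * ((γ2 - lmax1) / (γ1 + lmax1)) * (v ⬝ᵥ v) ≤
          (Tt *ᵥ v) ⬝ᵥ v) ∧
      (γ1 < lmin2 → Tt.IsSymm ∧ Tt.PosDef) := by
  -- eigendata
  set U1 := hS1.isHermitian.eigenvectorUnitary with hU1def
  set e1 := hS1.isHermitian.eigenvalues with he1def
  set U2 := hS2.isHermitian.eigenvectorUnitary with hU2def
  set e2 := hS2.isHermitian.eigenvalues with he2def
  have hS1d : S1 = conjD U1 e1 := by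
    simpa [conjD, RCLike.ofReal_real_eq_id, Function.comp_def] using
      hS1.isHermitian.spectral_theorem
  have hS2d : S2 = conjD U2 e2 := by
    simpa [conjD, RCLike.ofReal_real_eq_id, Function.comp_def] using
      hS2.isHermitian.spectral_theorem
  -- scalar facts
  have he1lb : ∀ i, lmin1 ≤ e1 i := fun i => hlmin1.2 (Set.mem_range_self i)
  have he1ub : ∀ i, e1 i ≤ lmax1 := fun i => hlmax1.2 (Set.mem_range_self i)
  have he2lb : ∀ i, lmin2 ≤ e2 i := fun i => hlmin2.2 (Set.mem_range_self i)
  have hγ1l1 : γ1 ≤ lmin1 := le_trans hγ1' (min_le_left _ _)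
  have hγ1l2 : γ1 ≤ lmin2 := le_trans hγ1' (min_le_right _ _)
  have hlmax1pos : 0 < lmax1 := by
    obtain ⟨i0, hi0⟩ := hlmax1.1
    rw [← hi0]
    exact hS1.eigenvalues_pos i0
  have hγ2big : 3 * lmax1 ≤ γ2 := le_trans (by nlinarith [le_max_left lmax1 lmax2]) hγ2
  have hγ2gt : lmax1 < γ2 := by nlinarith
  have hγ2pos : 0 < γ2 := lt_trans hlmax1pos hγ2gt
  have hlmin2pos : 0 < lmin2 := lt_of_lt_of_le hγ1 hγ1l2
  have hp : ∀ i, 0 < γ1 + e1 i := fun i => by nlinarith [he1lb i]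
  have hq : ∀ i, 0 < γ2 - e1 i := fun i => by nlinarith [he1ub i]
  have hr : ∀ i, 0 ≤ e2 i - γ1 := fun i => by nlinarith [he2lb i]
  have hw : ∀ i, 0 < γ2 + e2 i := fun i => by nlinarith [he2lb i]
  -- matrix identities
  have hPd : γ1 • (1 : Matrix (Fin N) (Fin N) ℝ) + S1 = conjD U1 (fun i => γ1 + e1 i) := by
    rw [hS1d, ← conjD_const U1 γ1, conjD_add]
  have hsqP : hP1.sqrt = conjD U1 (fun i => Real.sqrt (γ1 + e1 i)) :=
    conjD_sqrt U1 hP1 (fun i => (hp i).le) hPd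
  have hsqPinv : hP1.sqrt⁻¹ = conjD U1 (fun i => (Real.sqrt (γ1 + e1 i))⁻¹) := by
    rw [hsqP]
    exact conjD_inv U1 fun i => (Real.sqrt_pos.mpr (hp i)).ne'
  have hQd : γ2 • (1 : Matrix (Fin N) (Fin N) ℝ) - S1 = conjD U1 (fun i => γ2 - e1 i) := by
    rw [sub_eq_iff_eq_add, hS1d, conjD_add]
    simpa using (conjD_const U1 γ2).symm
  have hsqQ : hQ1.sqrt = conjD U1 (fun i => Real.sqrt (γ2 - e1 i)) :=
    conjD_sqrt U1 hQ1 (fun i => (hq i).le) hQd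
  set b : Fin N → ℝ := fun i => Real.sqrt (γ2 - e1 i) * (Real.sqrt (γ1 + e1 i))⁻¹ with hbdef
  have hB : hQ1.sqrt * hP1.sqrt⁻¹ = conjD U1 b := by
    rw [hsqQ, hsqPinv, conjD_mul]
  have hBT : hP1.sqrt⁻¹ * hQ1.sqrt = conjD U1 b := by
    rw [hsqPinv, hsqQ, conjD_mul]
    exact congrArg _ (funext fun i => mul_comm _ _)
  have hRd : S2 - γ1 • (1 : Matrix (Fin N) (Fin N) ℝ) = conjD U2 (fun i => e2 i - γ1) := by
    rw [sub_eq_iff_eq_add, hS2d, ← conjD_const U2 γ1, conjD_add]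
    exact congrArg _ (funext fun i => by ring)
  have hWd : γ2 • (1 : Matrix (Fin N) (Fin N) ℝ) + S2 = conjD U2 (fun i => γ2 + e2 i) := by
    rw [hS2d, ← conjD_const U2 γ2, conjD_add]
  have hWinv : (γ2 • (1 : Matrix (Fin N) (Fin N) ℝ) + S2)⁻¹
      = conjD U2 (fun i => (γ2 + e2 i)⁻¹) := by
    rw [hWd]
    exact conjD_inv U2 fun i => (hw i).ne'
  set μ : Fin N → ℝ := fun i => (e2 i - γ1) * (γ2 + e2 i)⁻¹ with hμdef
  have hM : (S2 - γ1 • (1 : Matrix (Fin N) (Fin N) ℝ)) *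
      (γ2 • (1 : Matrix (Fin N) (Fin N) ℝ) + S2)⁻¹ = conjD U2 μ := by
    rw [hRd, hWinv, conjD_mul]
  have hTt' : Tt = conjD U1 b * conjD U2 μ * conjD U1 b := by
    rw [hTt]
    have hassoc : hP1.sqrt⁻¹ * hQ1.sqrt * (S2 - γ1 • (1 : Matrix (Fin N) (Fin N) ℝ)) *
        (γ2 • (1 : Matrix (Fin N) (Fin N) ℝ) + S2)⁻¹ * hQ1.sqrt * hP1.sqrt⁻¹
        = (hP1.sqrt⁻¹ * hQ1.sqrt) *
          ((S2 - γ1 • (1 : Matrix (Fin N) (Fin N) ℝ)) *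
            (γ2 • (1 : Matrix (Fin N) (Fin N) ℝ) + S2)⁻¹) *
          (hQ1.sqrt * hP1.sqrt⁻¹) := by
      simp only [Matrix.mul_assoc]
    rw [hassoc, hBT, hM, hB]
  -- symmetry
  have hherm : Tt.IsHermitian := by
    rw [hTt']
    show (conjD U1 b * conjD U2 μ * conjD U1 b)ᴴ = _
    rw [Matrix.conjTranspose_mul, Matrix.conjTranspose_mul, (conjD_hermitian U1 b).eq,
      (conjD_hermitian U2 μ).eq, Matrix.mul_assoc]
  have hsymm : Tt.IsSymm := by
    rw [Matrix.IsSymm, ← Matrix.conjTranspose_eq_transpose_of_trivial]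
    exact hherm
  -- pointwise eigenvalue bounds
  have hμlb : ∀ i, (lmin2 - γ1) / (γ2 + lmin2) ≤ μ i := by
    intro i
    show (lmin2 - γ1) / (γ2 + lmin2) ≤ (e2 i - γ1) * (γ2 + e2 i)⁻¹
    rw [← div_eq_mul_inv, div_le_div_iff₀ (by linarith) (hw i)]
    nlinarith [he2lb i]
  have hb2 : ∀ i, (γ2 - lmax1) / (γ1 + lmax1) ≤ b i * b i := by
    intro i
    have hbb : b i * b i = (γ2 - e1 i) * (γ1 + e1 i)⁻¹ := by
      show Real.sqrt (γ2 - e1 i) * (Real.sqrt (γ1 + e1 i))⁻¹ *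
        (Real.sqrt (γ2 - e1 i) * (Real.sqrt (γ1 + e1 i))⁻¹) = _
      rw [mul_mul_mul_comm, Real.mul_self_sqrt (hq i).le, ← mul_inv,
        Real.mul_self_sqrt (hp i).le]
    rw [hbb, ← div_eq_mul_inv, div_le_div_iff₀ (by linarith) (hp i)]
    nlinarith [he1ub i, he1lb i]
  -- the quadratic lower bound
  have main : ∀ v : Fin N → ℝ,
      ((lmin2 - γ1) / (γ2 + lmin2)) * ((γ2 - lmax1) / (γ1 + lmax1)) * (v ⬝ᵥ v) ≤
        (Tt *ᵥ v) ⬝ᵥ v := by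
    intro v
    set w : Fin N → ℝ := conjD U1 b *ᵥ v with hwdef
    have h1 : (Tt *ᵥ v) ⬝ᵥ v = (conjD U2 μ *ᵥ w) ⬝ᵥ w := by
      rw [hTt', ← Matrix.mulVec_mulVec, ← Matrix.mulVec_mulVec,
        symm_shuffle (conjD_hermitian U1 b), ← hwdef]
    have h2 : ((lmin2 - γ1) / (γ2 + lmin2)) * (w ⬝ᵥ w) ≤ (conjD U2 μ *ᵥ w) ⬝ᵥ w :=
      conjD_quad_lower U2 hμlb w
    have h3 : w ⬝ᵥ w = ((conjD U1 b * conjD U1 b) *ᵥ v) ⬝ᵥ v := by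
      rw [← Matrix.mulVec_mulVec, symm_shuffle (conjD_hermitian U1 b), ← hwdef]
      exact (dotProduct_comm _ _)
    have h4 : ((γ2 - lmax1) / (γ1 + lmax1)) * (v ⬝ᵥ v) ≤ w ⬝ᵥ w := by
      rw [h3, conjD_mul]
      exact conjD_quad_lower U1 hb2 v
    have hm0 : 0 ≤ (lmin2 - γ1) / (γ2 + lmin2) :=
      div_nonneg (by linarith) (by linarith)
    have := mul_le_mul_of_nonneg_left h4 hm0
    rw [h1]
    calc ((lmin2 - γ1) / (γ2 + lmin2)) * ((γ2 - lmax1) / (γ1 + lmax1)) * (v ⬝ᵥ v)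
        = ((lmin2 - γ1) / (γ2 + lmin2)) * (((γ2 - lmax1) / (γ1 + lmax1)) * (v ⬝ᵥ v)) := by ring
      _ ≤ ((lmin2 - γ1) / (γ2 + lmin2)) * (w ⬝ᵥ w) := this
      _ ≤ (conjD U2 μ *ᵥ w) ⬝ᵥ w := h2
  refine ⟨hsymm, main, fun hlt => ⟨hsymm, Matrix.PosDef.of_dotProduct_mulVec_pos hherm ?_⟩⟩
  intro x hx
  have hxx : 0 < x ⬝ᵥ x := by
    have := Matrix.dotProduct_self_star_pos_iff.mpr hx
    rwa [star_trivial] at this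
  have hmpos : 0 < (lmin2 - γ1) / (γ2 + lmin2) :=
    div_pos (by linarith) (by linarith)
  have hcpos : 0 < (γ2 - lmax1) / (γ1 + lmax1) :=
    div_pos (by linarith) (by linarith)
  have h := main x
  rw [star_trivial, dotProduct_comm]
  calc (0:ℝ) < ((lmin2 - γ1) / (γ2 + lmin2)) * ((γ2 - lmax1) / (γ1 + lmax1)) * (x ⬝ᵥ x) :=
        mul_pos (mul_pos hmpos hcpos) hxx
    _ ≤ (Tt *ᵥ x) ⬝ᵥ x := h
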